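/- Let C be a simple closed polygon in the plane whose leftmost vertex is v₁ with neighbors v₂ and vₙ on the polygon, both having larger x-coordinate. Then in a small neighborhood of v₁, the interior of the polygon lies between the two edges v₁v₂ and v₁vₙ on the right side of v₁. -/

import Mathlib

open Complex Set Finset Real Filter
/-- A closed polygonal path `p 0, p 1, …, p (n-1)` (cyclically) is simple: any two
non-adjacent edges are disjoint, and any two consecutive edges meet exactly in their
common endpoint. -/
def IsSimplePolygon {n : ℕ} [NeZero n] (p : Fin n → ℝ × ℝ) : Prop :=
  (∀ k : Fin n,
      segment ℝ (p k) (p (k + 1)) ∩ segment ℝ (p (k + 1)) (p (k + 2)) = {p (k + 1)}) ∧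
    ∀ k l : Fin n, k ≠ l → l ≠ k + 1 → k ≠ l + 1 →
      segment ℝ (p k) (p (k + 1)) ∩ segment ℝ (p l) (p (l + 1)) = ∅

noncomputable section

namespace LVI

def cx (v : ℝ × ℝ) : ℂ := ⟨v.1, v.2⟩

@[simp] lemma cx_re (v : ℝ × ℝ) : (cx v).re = v.1 := rfl
@[simp] lemma cx_im (v : ℝ × ℝ) : (cx v).im = v.2 := rfl

lemma cx_inj {a b : ℝ × ℝ} (h : cx a = cx b) : a = b := by
  have h1 := congrArg Complex.re h
  have h2 := congrArg Complex.im h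
  exact Prod.ext h1 h2

lemma cx_smul (r : ℝ) (a : ℝ × ℝ) : cx (r • a) = (r : ℂ) * cx a := by
  apply Complex.ext <;> simp [cx]

lemma cx_add (a b : ℝ × ℝ) : cx (a + b) = cx a + cx b := by
  apply Complex.ext <;> simp [cx]

lemma seg_fst {a b x : ℝ × ℝ} (h : x ∈ segment ℝ a b) : min a.1 b.1 ≤ x.1 := by
  obtain ⟨s, t, hs, ht, hst, rfl⟩ := h
  have h1 : min a.1 b.1 ≤ a.1 := min_le_left _ _
  have h2 : min a.1 b.1 ≤ b.1 := min_le_right _ _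
  have : (s • a + t • b).1 = s * a.1 + t * b.1 := rfl
  rw [this]
  have heq : s * (a.1 ⊓ b.1) + t * (a.1 ⊓ b.1) = a.1 ⊓ b.1 := by rw [← add_mul, hst, one_mul]
  have e1 := mul_le_mul_of_nonneg_left h1 hs
  have e2 := mul_le_mul_of_nonneg_left h2 ht
  linarith

lemma seg_abs {a b x : ℝ × ℝ} (h : x ∈ segment ℝ a b) :
    ‖cx x‖ ≤ max (‖cx a‖) (‖cx b‖) := by
  obtain ⟨s, t, hs, ht, hst, rfl⟩ := h
  have : cx (s • a + t • b) = (s:ℂ) * cx a + (t:ℂ) * cx b := by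
    rw [cx_add, cx_smul, cx_smul]
  rw [this]
  calc ‖(s:ℂ) * cx a + (t:ℂ) * cx b‖
      ≤ ‖(s:ℂ) * cx a‖ + ‖(t:ℂ) * cx b‖ := norm_add_le _ _
    _ ≤ s * max (‖cx a‖) (‖cx b‖)
        + t * max (‖cx a‖) (‖cx b‖) := by
        rw [norm_mul, norm_mul]
        simp only [Complex.norm_real, Real.norm_eq_abs, _root_.abs_of_nonneg hs, _root_.abs_of_nonneg ht]
        gcongr
        · exact le_max_left _ _
        · exact le_max_right _ _
    _ = max (‖cx a‖) (‖cx b‖) := by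
        rw [← add_mul, hst, one_mul]


lemma ratio_slit {a b q : ℝ × ℝ} (hq : q ∉ segment ℝ a b) :
    (cx b - cx q) / (cx a - cx q) ∈ Complex.slitPlane := by
  have ha : a ≠ q := by rintro rfl; exact hq (left_mem_segment ℝ a b)
  have hA : cx a - cx q ≠ 0 := by
    intro h; exact ha (cx_inj (by linear_combination h))
  rw [Complex.mem_slitPlane_iff]
  by_contra hcon
  push_neg at hcon
  obtain ⟨hre, him⟩ := hcon
  set ζ : ℂ := (cx b - cx q) / (cx a - cx q) with hζ
  have hζval : ζ = (ζ.re : ℂ) := by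
    apply Complex.ext
    · simp
    · simp [him]
  set t : ℝ := ζ.re with ht
  have ht0 : t ≤ 0 := by linarith [hre]
  have key : cx b - cx q = (t : ℂ) * (cx a - cx q) := by
    have h := div_mul_cancel₀ (cx b - cx q) hA
    rw [← hζ, hζval] at h
    exact h.symm
  have h1 : b.1 - q.1 = t * (a.1 - q.1) := by
    have := congrArg Complex.re key; simpa using this
  have h2 : b.2 - q.2 = t * (a.2 - q.2) := by
    have := congrArg Complex.im key; simpa using this
  apply hq
  have hne : t - 1 ≠ 0 := by intro h; linarith
  have hne' : (1:ℝ) - t ≠ 0 := by intro h; linarith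
  refine ⟨t / (t - 1), 1 / (1 - t), ?_, ?_, ?_, ?_⟩
  · rw [div_nonneg_iff]; right; constructor <;> linarith
  · have h01 : (0:ℝ) < 1 - t := by linarith
    positivity
  · field_simp
    ring
  · apply Prod.ext
    · show t / (t - 1) * a.1 + 1 / (1 - t) * b.1 = q.1
      field_simp
      nlinarith [h1]
    · show t / (t - 1) * a.2 + 1 / (1 - t) * b.2 = q.2
      field_simp
      nlinarith [h2]

def wind {n : ℕ} [NeZero n] (p : Fin n → ℝ × ℝ) (q : ℝ × ℝ) : ℝ :=
  ∑ k : Fin n, Complex.arg ((cx (p (k + 1)) - cx q) / (cx (p k) - cx q))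
lemma cx_cont : Continuous cx := by
  have : cx = fun v : ℝ × ℝ => (v.1 : ℂ) + (v.2 : ℂ) * Complex.I := by
    funext v; apply Complex.ext <;> simp [cx]
  rw [this]
  exact (Complex.continuous_ofReal.comp continuous_fst).add
    ((Complex.continuous_ofReal.comp continuous_snd).mul continuous_const)

variable {n : ℕ} [NeZero n] {p : Fin n → ℝ × ℝ}

lemma denom_ne {q : ℝ × ℝ} (hq : ∀ k : Fin n, q ∉ segment ℝ (p k) (p (k + 1)))
    (k : Fin n) : cx (p k) - cx q ≠ 0 := by
  intro h
  have hpq : p k = q := cx_inj (by linear_combination h)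
  apply hq k
  rw [← hpq]
  exact left_mem_segment ℝ (p k) (p (k + 1))

lemma wind_int {q : ℝ × ℝ} (hq : ∀ k : Fin n, q ∉ segment ℝ (p k) (p (k + 1))) :
    ∃ m : ℤ, wind p q = m * (2 * π) := by
  set A : Fin n → ℂ := fun k => cx (p k) - cx q with hA
  have hAne : ∀ k, A k ≠ 0 := fun k => denom_ne hq k
  set ζ : Fin n → ℂ := fun k => A (k + 1) / A k with hζ
  have hζne : ∀ k, ζ k ≠ 0 := fun k => div_ne_zero (hAne (k + 1)) (hAne k)
  have hw : wind p q = ∑ k : Fin n, Complex.arg (ζ k) := rfl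
  have hexp : Complex.exp ((wind p q : ℂ) * Complex.I) = 1 := by
    rw [hw]
    push_cast
    rw [Finset.sum_mul, Complex.exp_sum]
    have hterm : ∀ k : Fin n, Complex.exp ((Complex.arg (ζ k) : ℂ) * Complex.I)
        = ζ k / (‖ζ k‖ : ℂ) := by
      intro k
      have h0 : (‖ζ k‖ : ℂ) ≠ 0 := by
        simp [hζne k]
      rw [eq_div_iff h0, mul_comm]
      exact Complex.norm_mul_exp_arg_mul_I (ζ k)
    calc ∏ k : Fin n, Complex.exp ((Complex.arg (ζ k) : ℂ) * Complex.I)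
        = ∏ k : Fin n, ζ k / (‖ζ k‖ : ℂ) := by
          exact Finset.prod_congr rfl fun k _ => hterm k
      _ = (∏ k : Fin n, ζ k) / (∏ k : Fin n, (‖ζ k‖ : ℂ)) :=
          Finset.prod_div_distrib _ _
      _ = 1 := by
          have hprod : ∏ k : Fin n, ζ k = 1 := by
            rw [hζ]
            simp only
            rw [Finset.prod_div_distrib]
            have : ∏ k : Fin n, A (k + 1) = ∏ k : Fin n, A k := by
              have := Equiv.prod_comp (Equiv.addRight (1 : Fin n)) A
              simpa [Equiv.coe_addRight] using this
            rw [this, div_self (Finset.prod_ne_zero_iff.2 fun k _ => hAne k)]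
          have habs : ∏ k : Fin n, (‖ζ k‖ : ℂ) = 1 := by
            rw [← Complex.ofReal_prod]
            rw [← norm_prod, hprod]
            simp
          rw [hprod, habs, div_one]
  obtain ⟨m, hm⟩ := Complex.exp_eq_one_iff.1 hexp
  refine ⟨m, ?_⟩
  have hI : ((wind p q : ℂ)) * Complex.I = ((m : ℝ) * (2 * π) : ℝ) * Complex.I := by
    rw [hm]; push_cast; ring
  have := mul_right_cancel₀ Complex.I_ne_zero hI
  exact_mod_cast this

lemma wind_contAt {q : ℝ × ℝ} (hq : ∀ k : Fin n, q ∉ segment ℝ (p k) (p (k + 1))) :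
    ContinuousAt (wind p) q := by
  have : Tendsto (fun x : ℝ × ℝ => ∑ k : Fin n,
      Complex.arg ((cx (p (k + 1)) - cx x) / (cx (p k) - cx x))) (nhds q)
      (nhds (∑ k : Fin n, Complex.arg ((cx (p (k + 1)) - cx q) / (cx (p k) - cx q)))) := by
    apply tendsto_finset_sum
    intro k _
    have hratio : ContinuousAt
        (fun x : ℝ × ℝ => (cx (p (k + 1)) - cx x) / (cx (p k) - cx x)) q :=
      ((continuous_const.sub cx_cont).continuousAt).div
        ((continuous_const.sub cx_cont).continuousAt) (denom_ne hq k)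
    exact ContinuousAt.comp (g := Complex.arg)
      (f := fun x : ℝ × ℝ => (cx (p (k + 1)) - cx x) / (cx (p k) - cx x)) (x := q)
      (Complex.continuousAt_arg (ratio_slit (hq k))) hratio
  exact this

lemma wind_const {s : Set (ℝ × ℝ)} (hs : IsPreconnected s)
    (hsub : ∀ q ∈ s, ∀ k : Fin n, q ∉ segment ℝ (p k) (p (k + 1)))
    {x y : ℝ × ℝ} (hx : x ∈ s) (hy : y ∈ s) : wind p x = wind p y := by
  have hcont : ContinuousOn (wind p) s :=
    fun q hqs => (wind_contAt (hsub q hqs)).continuousWithinAt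
  have key : ∀ x y : ℝ × ℝ, x ∈ s → y ∈ s → ¬ wind p x < wind p y := by
    intro x y hx hy hlt
    obtain ⟨mx, hmx⟩ := wind_int (hsub x hx)
    obtain ⟨my, hmy⟩ := wind_int (hsub y hy)
    have hmlt : (mx : ℝ) < my := by
      have h2π : (0:ℝ) < 2 * π := by positivity
      rw [hmx, hmy] at hlt
      exact lt_of_mul_lt_mul_right (by linarith) (le_of_lt h2π)
    have hmlt' : mx + 1 ≤ my := by exact_mod_cast hmlt
    have hy2 : wind p x + 2 * π ≤ wind p y := by
      rw [hmx, hmy]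
      have : ((mx : ℝ) + 1) * (2 * π) ≤ (my : ℝ) * (2 * π) := by
        have : ((mx + 1 : ℤ) : ℝ) ≤ (my : ℝ) := by exact_mod_cast hmlt'
        push_cast at this
        nlinarith [Real.pi_pos]
      nlinarith [Real.pi_pos]
    have hmem : wind p x + π ∈ Icc (wind p x) (wind p y) := by
      constructor <;> nlinarith [Real.pi_pos]
    obtain ⟨z, hz, hzv⟩ := hs.intermediate_value hx hy hcont hmem
    obtain ⟨mz, hmz⟩ := wind_int (hsub z hz)
    have e : (mz : ℝ) * (2 * π) = (mx : ℝ) * (2 * π) + π := by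
      rw [← hmz, hzv, hmx]
    have e2 : ((2 * mz - 2 * mx - 1 : ℤ) : ℝ) * π = 0 := by push_cast; linarith
    have e3 : ((2 * mz - 2 * mx - 1 : ℤ) : ℝ) = 0 :=
      by rcases mul_eq_zero.1 e2 with h | h; exact h; exact absurd h Real.pi_ne_zero
    have : (2 * mz - 2 * mx - 1 : ℤ) = 0 := by exact_mod_cast e3
    omega
  rcases lt_trichotomy (wind p x) (wind p y) with h | h | h
  · exact absurd h (key x y hx hy)
  · exact h
  · exact absurd h (key y x hy hx)
lemma wind_far (hn : 1 ≤ n) : ∃ R : ℝ, 0 < R ∧ ∀ q : ℝ × ℝ, R ≤ ‖cx q‖ →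
    (∀ k : Fin n, q ∉ segment ℝ (p k) (p (k + 1))) ∧ wind p q = 0 := by
  have hne : (Finset.univ : Finset (Fin n)).Nonempty := Finset.univ_nonempty
  set M : ℝ := (Finset.univ.sup' hne fun k => ‖cx (p k)‖) + 1 with hM
  have hM1 : 1 ≤ M := by
    have h0 : 0 ≤ Finset.univ.sup' hne fun k => ‖cx (p k)‖ := by
      obtain ⟨k, hk⟩ := hne
      exact le_trans (norm_nonneg _) (Finset.le_sup' (fun k => ‖cx (p k)‖) hk)
    linarith
  have hMk : ∀ k : Fin n, ‖cx (p k)‖ ≤ M - 1 := by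
    intro k
    have := Finset.le_sup' (fun k => ‖cx (p k)‖) (Finset.mem_univ k)
    linarith
  refine ⟨M * (8 * n + 8), by positivity, fun q hq => ?_⟩
  have hnR : (1:ℝ) ≤ n := by exact_mod_cast hn
  have havoid : ∀ k : Fin n, q ∉ segment ℝ (p k) (p (k + 1)) := by
    intro k hmem
    have h1 := seg_abs hmem
    have h2 := hMk k
    have h3 := hMk (k + 1)
    have h4 : ‖cx q‖ ≤ M - 1 := le_trans h1 (max_le h2 h3)
    nlinarith
  refine ⟨havoid, ?_⟩
  set S : ℝ := M * (8 * n + 7) with hS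
  have hSpos : 0 < S := by positivity
  set A : Fin n → ℂ := fun k => cx (p k) - cx q with hA
  have hAlow : ∀ k, S ≤ ‖A k‖ := by
    intro k
    have h1 : ‖cx q‖ - ‖cx (p k)‖ ≤ ‖cx q - cx (p k)‖ := by
      have := norm_sub_norm_le (cx q) (cx (p k))
      simpa using this
    have h2 : ‖A k‖ = ‖cx q - cx (p k)‖ := by
      rw [hA]; exact norm_sub_rev _ _
    have h3 := hMk k
    rw [h2]
    nlinarith
  set ζ : Fin n → ℂ := fun k => A (k + 1) / A k with hζ
  set δ : ℝ := 2 * M / S with hδ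
  have hδn : δ ≤ 1 / (4 * n) := by
    rw [hδ, hS, div_le_div_iff₀ (by positivity) (by positivity)]
    nlinarith
  have hδ4 : δ ≤ 1 / 4 := le_trans hδn (by rw [div_le_div_iff₀ (by positivity) (by positivity)]; nlinarith)
  have hδ0 : 0 < δ := by positivity
  have hterm : ∀ k : Fin n, |Complex.arg (ζ k)| ≤ π / (6 * n) := by
    intro k
    have hAk := hAlow k
    have hAkne : A k ≠ 0 := by
      intro h; rw [h] at hAk; simp at hAk; nlinarith
    have hζsub : ζ k - 1 = (cx (p (k + 1)) - cx (p k)) / A k := by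
      rw [hζ]
      field_simp [hA]
      simp only [hA]; ring
    have hnum : ‖cx (p (k + 1)) - cx (p k)‖ ≤ 2 * M := by
      calc ‖cx (p (k + 1)) - cx (p k)‖
          ≤ ‖cx (p (k + 1))‖ + ‖cx (p k)‖ := by
            have := norm_sub_le (cx (p (k + 1))) (cx (p k))
            simpa using this
        _ ≤ 2 * M := by have := hMk k; have := hMk (k + 1); linarith
    have hζ1 : ‖ζ k - 1‖ ≤ δ := by
      rw [hζsub, norm_div, hδ]
      exact div_le_div₀ (by positivity) hnum hSpos (hAlow k)
    have hre : 3 / 4 ≤ (ζ k).re := by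
      have h1 : |(ζ k - 1).re| ≤ ‖ζ k - 1‖ := Complex.abs_re_le_norm _
      have h2 : (ζ k - 1).re = (ζ k).re - 1 := by simp
      rw [h2] at h1
      have := abs_le.1 h1
      linarith
    have habs_low : 3 / 4 ≤ ‖ζ k‖ := by
      have h1 : ‖(1:ℂ)‖ - ‖ζ k - 1‖ ≤ ‖ζ k‖ := by
        have := norm_sub_norm_le (1:ℂ) (1 - ζ k)
        have he : (1:ℂ) - (1 - ζ k) = ζ k := by ring
        rw [he] at this
        have he2 : ‖(1:ℂ) - ζ k‖ = ‖ζ k - 1‖ :=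
          norm_sub_rev _ _
        simpa [he2] using this
      simp at h1
      linarith
    have him : |(ζ k).im| ≤ δ := by
      have h1 : |(ζ k - 1).im| ≤ ‖ζ k - 1‖ := Complex.abs_im_le_norm _
      have h2 : (ζ k - 1).im = (ζ k).im := by simp
      rw [h2] at h1
      linarith
    have hargle : |Complex.arg (ζ k)| ≤ π / 2 :=
      Complex.abs_arg_le_pi_div_two_iff.2 (by linarith)
    have hsinval : Real.sin (Complex.arg (ζ k)) = (ζ k).im / ‖ζ k‖ :=
      Complex.sin_arg _
    have habspos : 0 < ‖ζ k‖ := by linarith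
    have hsinabs : Real.sin |Complex.arg (ζ k)| ≤ 4 * δ / 3 := by
      have hb : |(ζ k).im| / ‖ζ k‖ ≤ 4 * δ / 3 := by
        rw [div_le_iff₀ habspos]
        nlinarith
      rcases abs_cases (Complex.arg (ζ k)) with ⟨he, _⟩ | ⟨he, _⟩
      · rw [he, hsinval]
        exact le_trans ((div_le_div_iff_of_pos_right habspos).2 (le_abs_self _)) hb
      · rw [he, Real.sin_neg, hsinval]
        calc -((ζ k).im / ‖ζ k‖) = -(ζ k).im / ‖ζ k‖ := by ring
          _ ≤ |(ζ k).im| / ‖ζ k‖ :=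
              (div_le_div_iff_of_pos_right habspos).2 (neg_le_abs _)
          _ ≤ 4 * δ / 3 := hb
    have hjordan := Real.mul_le_sin (abs_nonneg (Complex.arg (ζ k))) hargle
    have hπ := Real.pi_pos
    have h2 : 2 / π * |Complex.arg (ζ k)| ≤ 4 * δ / 3 := le_trans hjordan hsinabs
    have h1 : |Complex.arg (ζ k)| ≤ π / 2 * (4 * δ / 3) := by
      have h3 := mul_le_mul_of_nonneg_left h2 (le_of_lt (by positivity : (0:ℝ) < π / 2))
      calc |Complex.arg (ζ k)| = π / 2 * (2 / π * |Complex.arg (ζ k)|) := by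
            field_simp
        _ ≤ π / 2 * (4 * δ / 3) := h3
    have h4 : δ * (4 * n) ≤ 1 := by
      have h5 := hδn
      rw [le_div_iff₀ (by positivity)] at h5
      linarith
    calc |Complex.arg (ζ k)| ≤ π / 2 * (4 * δ / 3) := h1
      _ ≤ π / (6 * n) := by
          rw [le_div_iff₀ (by positivity : (0:ℝ) < 6 * n)]
          calc π / 2 * (4 * δ / 3) * (6 * n) = π * (δ * (4 * n)) := by ring
            _ ≤ π * 1 := mul_le_mul_of_nonneg_left h4 hπ.le
            _ = π := mul_one π
  have hsum : |wind p q| ≤ π / 6 := by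
    have h1 : |wind p q| ≤ ∑ k : Fin n, |Complex.arg (ζ k)| := by
      rw [wind]
      exact Finset.abs_sum_le_sum_abs _ _
    have h2 : ∑ k : Fin n, |Complex.arg (ζ k)| ≤ n * (π / (6 * n)) := by
      calc ∑ k : Fin n, |Complex.arg (ζ k)| ≤ ∑ _k : Fin n, π / (6 * n) :=
            Finset.sum_le_sum fun k _ => hterm k
        _ = n * (π / (6 * n)) := by
            rw [Finset.sum_const, Finset.card_univ, Fintype.card_fin, nsmul_eq_mul]
      
    have h3 : (n : ℝ) * (π / (6 * n)) = π / 6 := by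
      field_simp
    linarith
  obtain ⟨m, hm⟩ := wind_int havoid
  have hπ := Real.pi_pos
  have hm0 : m = 0 := by
    by_contra hm0
    have h1 : (1:ℝ) ≤ |(m:ℝ)| := by
      have := Int.one_le_abs (by exact_mod_cast hm0 : m ≠ 0)
      exact_mod_cast this
    have h2 : |wind p q| = |(m:ℝ)| * (2 * π) := by
      rw [hm, abs_mul]
      rw [abs_of_pos (by positivity : (0:ℝ) < 2 * π)]
    nlinarith
  rw [hm, hm0]
  simp
lemma sub_cx_ne {a b : ℝ × ℝ} (h : a ≠ b) : cx a - cx b ≠ 0 := by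
  intro hc; exact h (cx_inj (by linear_combination hc))

lemma wind_ray (hn3 : 3 ≤ n) {u : ℝ × ℝ} {r0 : ℝ} (hr0 : 0 < r0)
    (hvne : ∀ k : Fin n, k ≠ 0 → cx (p k) - cx (p 0) ≠ 0)
    (hrest : ∀ k : Fin n, k ≠ 0 → k ≠ 0 - 1 →
        (cx (p (k + 1)) - cx (p 0)) / (cx (p k) - cx (p 0)) ∈ Complex.slitPlane)
    (hDslit : (cx (p 1) - cx (p 0)) / (-(cx u)) ∈ Complex.slitPlane)
    (hEslit : (-(cx u)) / (cx (p (0 - 1)) - cx (p 0)) ∈ Complex.slitPlane)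
    (hU : cx u ≠ 0)
    (hray : ∀ r : ℝ, 0 < r → r ≤ r0 →
        ∀ k : Fin n, (p 0 + r • u) ∉ segment ℝ (p k) (p (k + 1))) :
    wind p (p 0 + r0 • u) =
      (∑ k ∈ (Finset.univ.erase (0 : Fin n)).erase (0 - 1),
        Complex.arg ((cx (p (k + 1)) - cx (p 0)) / (cx (p k) - cx (p 0))))
      + Complex.arg ((cx (p 1) - cx (p 0)) / (-(cx u)))
      + Complex.arg ((-(cx u)) / (cx (p (0 - 1)) - cx (p 0))) := by
  have h10 : (1 : Fin n) ≠ 0 := by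
    intro h
    have := Fin.one_eq_zero_iff.1 h
    omega
  have hm10 : (0 : Fin n) - 1 ≠ 0 := by
    intro h
    apply h10
    have : (0 : Fin n) - 1 + 1 = 0 + 1 := by rw [h]
    simpa using this.symm
  set D : ℂ := cx (p 1) - cx (p 0) with hD
  set E : ℂ := cx (p (0 - 1)) - cx (p 0) with hE
  set U : ℂ := cx u with hUdef
  set rest : Finset (Fin n) := (Finset.univ.erase (0 : Fin n)).erase (0 - 1) with hrest_def
  set Φ : ℝ := (∑ k ∈ rest,
        Complex.arg ((cx (p (k + 1)) - cx (p 0)) / (cx (p k) - cx (p 0))))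
      + Complex.arg (D / (-U)) + Complex.arg ((-U) / E) with hΦ
  set x : ℝ → ℝ × ℝ := fun r => p 0 + r • u with hx
  have hcxx : ∀ r : ℝ, cx (x r) = cx (p 0) + (r : ℂ) * U := by
    intro r; rw [hx]; simp only; rw [cx_add, cx_smul]
  -- the sum splits
  have hsplit : ∀ r : ℝ, wind p (x r) =
      Complex.arg ((cx (p (0 + 1)) - cx (x r)) / (cx (p 0) - cx (x r)))
      + Complex.arg ((cx (p (0 - 1 + 1)) - cx (x r)) / (cx (p (0 - 1)) - cx (x r)))
      + ∑ k ∈ rest, Complex.arg ((cx (p (k + 1)) - cx (x r)) / (cx (p k) - cx (x r))) := by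
    intro r
    rw [wind]
    rw [← Finset.add_sum_erase _ _ (Finset.mem_univ (0 : Fin n))]
    rw [← Finset.add_sum_erase _ _ (Finset.mem_erase.2 ⟨hm10, Finset.mem_univ _⟩)]
    rw [add_assoc]
  -- tendsto of each piece
  have hXtend : Filter.Tendsto (fun r : ℝ => cx (x r)) (nhdsWithin 0 (Ioi 0)) (nhds (cx (p 0))) := by
    have hc : Continuous (fun r : ℝ => cx (p 0) + (r : ℂ) * U) :=
      continuous_const.add (Complex.continuous_ofReal.mul continuous_const)
    have := (hc.tendsto 0).mono_left (nhdsWithin_le_nhds : nhdsWithin (0:ℝ) (Ioi 0) ≤ nhds 0)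
    simp only [Complex.ofReal_zero, zero_mul, add_zero] at this
    exact Filter.Tendsto.congr (fun r => (hcxx r).symm) this
  have htend0 : Filter.Tendsto
      (fun r : ℝ => Complex.arg ((cx (p (0 + 1)) - cx (x r)) / (cx (p 0) - cx (x r))))
      (nhdsWithin 0 (Ioi 0)) (nhds (Complex.arg (D / (-U)))) := by
    have hg : Filter.Tendsto (fun r : ℝ => Complex.arg ((D - (r : ℂ) * U) / (-U)))
        (nhdsWithin 0 (Ioi 0)) (nhds (Complex.arg (D / (-U)))) := by
      have hUne : (-U) ≠ 0 := neg_ne_zero.2 hU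
      have hcont : Filter.Tendsto (fun r : ℝ => (D - (r : ℂ) * U) / (-U))
          (nhdsWithin 0 (Ioi 0)) (nhds (D / (-U))) := by
        have hc : Continuous (fun r : ℝ => (D - (r : ℂ) * U) / (-U)) :=
          (continuous_const.sub (Complex.continuous_ofReal.mul continuous_const)).div_const _
        have := (hc.tendsto 0).mono_left (nhdsWithin_le_nhds : nhdsWithin (0:ℝ) (Ioi 0) ≤ nhds 0)
        simpa using this
      exact (Complex.continuousAt_arg hDslit).tendsto.comp hcont
    apply hg.congr'
    filter_upwards [self_mem_nhdsWithin] with r hr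
    have hrpos : 0 < r := hr
    have h1 : cx (p (0 + 1)) - cx (x r) = D - (r : ℂ) * U := by
      rw [hcxx r]; simp only [zero_add, hD]; ring
    have h2 : cx (p 0) - cx (x r) = -((r : ℂ) * U) := by
      rw [hcxx r]; ring
    rw [h1, h2]
    have h3 : (D - (r : ℂ) * U) / (-((r : ℂ) * U))
        = ((1 / r : ℝ) : ℂ) * ((D - (r : ℂ) * U) / (-U)) := by
      have hrne : (r : ℂ) ≠ 0 := Complex.ofReal_ne_zero.2 (ne_of_gt hrpos)
      have hUne : (U : ℂ) ≠ 0 := hU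
      push_cast
      field_simp
    rw [h3, Complex.arg_real_mul _ (by positivity : (0:ℝ) < 1 / r)]
  have htendE : Filter.Tendsto
      (fun r : ℝ => Complex.arg ((cx (p (0 - 1 + 1)) - cx (x r)) / (cx (p (0 - 1)) - cx (x r))))
      (nhdsWithin 0 (Ioi 0)) (nhds (Complex.arg ((-U) / E))) := by
    have hEne : E ≠ 0 := hvne (0 - 1) hm10
    have hg : Filter.Tendsto (fun r : ℝ => Complex.arg ((-U) / (E - (r : ℂ) * U)))
        (nhdsWithin 0 (Ioi 0)) (nhds (Complex.arg ((-U) / E))) := by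
      have hcont : Filter.Tendsto (fun r : ℝ => (-U) / (E - (r : ℂ) * U))
          (nhdsWithin 0 (Ioi 0)) (nhds ((-U) / E)) := by
        have hc : ContinuousAt (fun r : ℝ => (-U) / (E - (r : ℂ) * U)) 0 := by
          apply ContinuousAt.div continuousAt_const
          · exact (continuous_const.sub
              (Complex.continuous_ofReal.mul continuous_const)).continuousAt
          · simpa using hEne
        have := hc.tendsto.mono_left (nhdsWithin_le_nhds : nhdsWithin (0:ℝ) (Ioi 0) ≤ nhds 0)
        simpa using this
      exact (Complex.continuousAt_arg hEslit).tendsto.comp hcont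
    apply hg.congr'
    filter_upwards [self_mem_nhdsWithin] with r hr
    have hrpos : 0 < r := hr
    have h1 : cx (p (0 - 1 + 1)) - cx (x r) = -((r : ℂ) * U) := by
      have : (0 : Fin n) - 1 + 1 = 0 := by abel
      rw [this, hcxx r]; ring
    have h2 : cx (p (0 - 1)) - cx (x r) = E - (r : ℂ) * U := by
      rw [hcxx r, hE]; ring
    rw [h1, h2]
    have h3 : (-((r : ℂ) * U)) / (E - (r : ℂ) * U)
        = ((r : ℝ) : ℂ) * ((-U) / (E - (r : ℂ) * U)) := by
      ring
    rw [h3, Complex.arg_real_mul _ hrpos]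
  have htendrest : ∀ k ∈ rest, Filter.Tendsto
      (fun r : ℝ => Complex.arg ((cx (p (k + 1)) - cx (x r)) / (cx (p k) - cx (x r))))
      (nhdsWithin 0 (Ioi 0))
      (nhds (Complex.arg ((cx (p (k + 1)) - cx (p 0)) / (cx (p k) - cx (p 0))))) := by
    intro k hk
    have hk1 : k ≠ 0 - 1 := (Finset.mem_erase.1 hk).1
    have hk0 : k ≠ 0 := (Finset.mem_erase.1 (Finset.mem_erase.1 hk).2).1
    have hkden : cx (p k) - cx (p 0) ≠ 0 := hvne k hk0
    have hcont : Filter.Tendsto (fun r : ℝ => (cx (p (k + 1)) - cx (x r)) / (cx (p k) - cx (x r)))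
        (nhdsWithin 0 (Ioi 0)) (nhds ((cx (p (k + 1)) - cx (p 0)) / (cx (p k) - cx (p 0)))) :=
      Filter.Tendsto.div (Filter.Tendsto.sub tendsto_const_nhds hXtend)
        (Filter.Tendsto.sub tendsto_const_nhds hXtend) hkden
    exact (Complex.continuousAt_arg (hrest k hk0 hk1)).tendsto.comp hcont
  have htendsum : Filter.Tendsto (fun r : ℝ => wind p (x r)) (nhdsWithin 0 (Ioi 0)) (nhds Φ) := by
    have h1 := Filter.Tendsto.add (Filter.Tendsto.add htend0 htendE)
      (tendsto_finset_sum rest htendrest)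
    rw [hΦ]
    have hΦ' : (∑ k ∈ rest,
          Complex.arg ((cx (p (k + 1)) - cx (p 0)) / (cx (p k) - cx (p 0))))
        + Complex.arg (D / (-U)) + Complex.arg ((-U) / E)
        = Complex.arg (D / (-U)) + Complex.arg ((-U) / E)
          + ∑ k ∈ rest, Complex.arg ((cx (p (k + 1)) - cx (p 0)) / (cx (p k) - cx (p 0))) := by
      ring
    rw [hΦ']
    exact Filter.Tendsto.congr (fun r => (hsplit r).symm) h1
  -- constancy along the ray
  have hconst : ∀ᶠ r in nhdsWithin (0:ℝ) (Ioi 0), wind p (x r) = wind p (x r0) := by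
    have hIoc : Ioc (0:ℝ) r0 ∈ nhdsWithin (0:ℝ) (Ioi 0) := by
      apply mem_nhdsWithin.2
      exact ⟨Iio r0, isOpen_Iio, hr0, fun y hy => ⟨hy.2, le_of_lt hy.1⟩⟩
    filter_upwards [hIoc] with r hr
    have hximg : IsPreconnected (x '' Ioc 0 r0) := by
      apply IsPreconnected.image isPreconnected_Ioc
      apply Continuous.continuousOn
      exact continuous_const.add (continuous_id.smul continuous_const)
    have hsub : ∀ q ∈ x '' Ioc 0 r0, ∀ k : Fin n, q ∉ segment ℝ (p k) (p (k + 1)) := by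
      rintro q ⟨r', hr', rfl⟩ k
      exact hray r' hr'.1 hr'.2 k
    exact wind_const hximg hsub (mem_image_of_mem x hr)
      (mem_image_of_mem x ⟨hr0, le_refl r0⟩)
  have hlim : Filter.Tendsto (fun r : ℝ => wind p (x r)) (nhdsWithin 0 (Ioi 0))
      (nhds (wind p (x r0))) :=
    Filter.Tendsto.congr' (Filter.EventuallyEq.symm hconst) tendsto_const_nhds
  have := tendsto_nhds_unique hlim htendsum
  rw [hx] at this
  simpa [hΦ, hD, hE, hUdef] using this
lemma angle_inj {x y : ℝ} (h : (x : Real.Angle) = (y : Real.Angle))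
    (hx1 : -π < x) (hx2 : x ≤ π) (hy1 : -π < y) (hy2 : y ≤ π) : x = y := by
  obtain ⟨k, hk⟩ := Real.Angle.angle_eq_iff_two_pi_dvd_sub.1 h
  have hπ := Real.pi_pos
  have hk1 : (k : ℝ) < 1 := by nlinarith
  have hk2 : (-1 : ℝ) < k := by nlinarith
  have : k = 0 := by
    have h1 : k < 1 := by exact_mod_cast hk1
    have h2 : -1 < k := by exact_mod_cast hk2
    omega
  rw [this] at hk
  push_cast at hk
  linarith

lemma arg_div_eq {z w : ℂ} (hz : 0 < z.re) (hw : 0 < w.re) :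
    Complex.arg (z / w) = Complex.arg z - Complex.arg w := by
  have hzne : z ≠ 0 := by intro h; rw [h] at hz; simp at hz
  have hwne : w ≠ 0 := by intro h; rw [h] at hw; simp at hw
  have hza := abs_lt.1 (Complex.abs_arg_lt_pi_div_two_iff.2 (Or.inl hz))
  have hwa := abs_lt.1 (Complex.abs_arg_lt_pi_div_two_iff.2 (Or.inl hw))
  have hπ := Real.pi_pos
  have hangle : ((Complex.arg (z / w) : ℝ) : Real.Angle)
      = ((Complex.arg z - Complex.arg w : ℝ) : Real.Angle) := by
    rw [Complex.arg_div_coe_angle hzne hwne, Real.Angle.coe_sub]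
  exact angle_inj hangle (Complex.neg_pi_lt_arg _) (Complex.arg_le_pi _)
    (by linarith) (by linarith)
lemma cx_sub (a b : ℝ × ℝ) : cx (a - b) = cx a - cx b := by
  apply Complex.ext <;> simp [cx]

lemma div_slit_of_det {z w : ℂ} (hw : w ≠ 0) (h : z.im * w.re - z.re * w.im ≠ 0) :
    z / w ∈ Complex.slitPlane := by
  rw [Complex.mem_slitPlane_iff]
  right
  have him : (z / w).im = (z.im * w.re - z.re * w.im) / Complex.normSq w := by
    rw [Complex.div_im]; ring
  rw [him]
  exact div_ne_zero h (ne_of_gt (Complex.normSq_pos.2 hw))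

lemma ne_zero_of_re_pos' {z : ℂ} (h : 0 < z.re) : z ≠ 0 := by
  intro hz; rw [hz] at h; simp at h
end LVI

set_option maxHeartbeats 2000000 in
open LVI Complex Set Finset in
theorem leftmost_vertex_interior (n : ℕ) [NeZero n] (hn : 3 ≤ n)
    (p : Fin n → ℝ × ℝ) (hsimple : IsSimplePolygon p)
    (hleft : ∀ k : Fin n, k ≠ 0 → (p 0).1 < (p k).1)
    (C : Set (ℝ × ℝ)) (hC : C = ⋃ k : Fin n, segment ℝ (p k) (p (k + 1))) :
    ∃ ε > (0 : ℝ),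
      (∀ q : ℝ × ℝ, dist q (p 0) < ε →
          (∃ s t : ℝ, 0 < s ∧ 0 < t ∧
            q = p 0 + s • (p 1 - p 0) + t • (p (0 - 1) - p 0)) →
          q ∉ C ∧ Bornology.IsBounded (connectedComponentIn Cᶜ q)) ∧
      (∀ q : ℝ × ℝ, dist q (p 0) < ε → q.1 < (p 0).1 →
          q ∉ C ∧ ¬ Bornology.IsBounded (connectedComponentIn Cᶜ q)) := by
  have hπ := Real.pi_pos
  have hn1 : 1 ≤ n := by omega
  have h10 : (1 : Fin n) ≠ 0 := by
    intro h
    have := Fin.one_eq_zero_iff.1 h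
    omega
  have hm10 : (0 : Fin n) - 1 ≠ 0 := by
    intro h
    apply h10
    have : (0 : Fin n) - 1 + 1 = 0 + 1 := by rw [h]
    simpa using this.symm
  have hidx1 : (0 : Fin n) - 1 + 1 = 0 := by abel
  have hidx2 : (0 : Fin n) - 1 + 2 = 1 := by open Fin.CommRing in ring
  -- edge vectors
  set d : ℝ × ℝ := p 1 - p 0 with hd_def
  set e : ℝ × ℝ := p (0 - 1) - p 0 with he_def
  have hp1 : p 1 = p 0 + d := by rw [hd_def]; abel
  have hpe : p (0 - 1) = p 0 + e := by rw [he_def]; abel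
  have hd1 : 0 < d.1 := by
    have h := hleft 1 h10
    have hfst : d.1 = (p 1).1 - (p 0).1 := rfl
    rw [hfst]; linarith
  have he1 : 0 < e.1 := by
    have h := hleft (0 - 1) hm10
    have hfst : e.1 = (p (0 - 1)).1 - (p 0).1 := rfl
    rw [hfst]; linarith
  set Δ : ℝ := d.1 * e.2 - d.2 * e.1 with hΔ_def
  -- the two incident edge directions are linearly independent
  have hsimp1 : segment ℝ (p (0 - 1)) (p 0) ∩ segment ℝ (p 0) (p 1) = {p 0} := by
    have h := hsimple.1 (0 - 1)
    rw [hidx1, hidx2] at h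
    exact h
  have hΔ : Δ ≠ 0 := by
    intro hΔ0
    set c : ℝ := e.1 / d.1 with hc_def
    have hc : 0 < c := by positivity
    have he_eq : e = c • d := by
      apply Prod.ext
      · show e.1 = c * d.1
        rw [hc_def]; field_simp
      · show e.2 = c * d.2
        rw [hc_def, hΔ_def] at *
        field_simp
        nlinarith [hΔ0]
    set μ : ℝ := min 1 c / 2 with hμ_def
    have hμ0 : 0 < μ := by positivity
    have hμ1 : μ < 1 := by
      have : min 1 c ≤ 1 := min_le_left _ _
      rw [hμ_def]; linarith
    have hμc : μ < c := by
      have : min 1 c ≤ c := min_le_right _ _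
      rw [hμ_def]; linarith
    set z : ℝ × ℝ := p 0 + μ • d with hz_def
    have hz1 : z ∈ segment ℝ (p 0) (p 1) := by
      refine ⟨1 - μ, μ, by linarith, by linarith, by ring, ?_⟩
      rw [hp1, hz_def]
      apply Prod.ext
      · show (1 - μ) * (p 0).1 + μ * ((p 0).1 + d.1) = (p 0).1 + μ * d.1
        ring
      · show (1 - μ) * (p 0).2 + μ * ((p 0).2 + d.2) = (p 0).2 + μ * d.2
        ring
    have hz2 : z ∈ segment ℝ (p (0 - 1)) (p 0) := by
      refine ⟨μ / c, 1 - μ / c, by positivity, ?_, by ring, ?_⟩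
      · have : μ / c < 1 := (div_lt_one hc).2 hμc
        linarith
      · rw [hpe, he_eq, hz_def]
        apply Prod.ext
        · show μ / c * ((p 0).1 + c * d.1) + (1 - μ / c) * (p 0).1 = (p 0).1 + μ * d.1
          field_simp
          ring
        · show μ / c * ((p 0).2 + c * d.2) + (1 - μ / c) * (p 0).2 = (p 0).2 + μ * d.2
          field_simp
          ring
    have hzmem : z ∈ ({p 0} : Set (ℝ × ℝ)) := by
      rw [← hsimp1]; exact ⟨hz2, hz1⟩
    have hz0 : z = p 0 := hzmem
    rw [hz_def] at hz0
    have : μ • d = 0 := by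
      have := congrArg (fun w => w - p 0) hz0
      simpa using this
    have : μ * d.1 = 0 := congrArg Prod.fst this
    nlinarith
  -- minimum x-gap
  have hne_erase : ((Finset.univ : Finset (Fin n)).erase 0).Nonempty :=
    ⟨1, Finset.mem_erase.2 ⟨h10, Finset.mem_univ _⟩⟩
  set m' : ℝ := (Finset.univ.erase (0 : Fin n)).inf' hne_erase (fun k => (p k).1) with hm'_def
  have hm'gt : (p 0).1 < m' := by
    rw [hm'_def, Finset.lt_inf'_iff]
    intro k hk
    exact hleft k (Finset.mem_erase.1 hk).1
  have hm'le : ∀ k : Fin n, k ≠ 0 → m' ≤ (p k).1 := by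
    intro k hk
    exact Finset.inf'_le _ (Finset.mem_erase.2 ⟨hk, Finset.mem_univ _⟩)
  set ε : ℝ := m' - (p 0).1 with hε_def
  have hε : 0 < ε := by rw [hε_def]; linarith
  -- all vertices have x ≥ (p 0).1
  have hge : ∀ k : Fin n, (p 0).1 ≤ (p k).1 := by
    intro k
    by_cases hk : k = 0
    · rw [hk]
    · exact (hleft k hk).le
  -- membership criterion for C
  have hCiff : ∀ z : ℝ × ℝ, z ∉ C ↔ ∀ k : Fin n, z ∉ segment ℝ (p k) (p (k + 1)) := by
    intro z
    rw [hC]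
    simp [mem_iUnion]
  -- left half plane avoids C
  have hHavoid : ∀ z : ℝ × ℝ, z.1 < (p 0).1 → ∀ k : Fin n, z ∉ segment ℝ (p k) (p (k + 1)) := by
    intro z hz k hmem
    have h1 := seg_fst hmem
    have h2 := hge k
    have h3 := hge (k + 1)
    have : min (p k).1 (p (k + 1)).1 ≥ (p 0).1 := le_min h2 h3
    linarith
  -- segments not incident to p 0 stay at x ≥ m'
  have hfar_seg : ∀ k : Fin n, k ≠ 0 → k ≠ 0 - 1 →
      ∀ z ∈ segment ℝ (p k) (p (k + 1)), m' ≤ z.1 := by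
    intro k hk0 hk1 z hz
    have h1 := seg_fst hz
    have h2 := hm'le k hk0
    have hk10 : k + 1 ≠ 0 := by
      intro h
      apply hk1
      have : k + 1 - 1 = 0 - 1 := by rw [h]
      simpa using this
    have h3 := hm'le (k + 1) hk10
    have : m' ≤ min (p k).1 (p (k + 1)).1 := le_min h2 h3
    linarith
  have hp0far : ∀ k : Fin n, k ≠ 0 → k ≠ 0 - 1 → p 0 ∉ segment ℝ (p k) (p (k + 1)) := by
    intro k hk0 hk1 hmem
    have := hfar_seg k hk0 hk1 (p 0) hmem
    linarith
  -- far field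
  obtain ⟨R, hRpos, hfar⟩ := wind_far (p := p) hn1
  -- half plane: wind = 0
  have hHconv : Convex ℝ {z : ℝ × ℝ | z.1 < (p 0).1} :=
    convex_halfSpace_lt ⟨fun a b => rfl, fun c a => rfl⟩ _
  have hHsub : ∀ z ∈ {z : ℝ × ℝ | z.1 < (p 0).1}, ∀ k : Fin n,
      z ∉ segment ℝ (p k) (p (k + 1)) := fun z hz => hHavoid z hz
  have hwindH : ∀ z : ℝ × ℝ, z.1 < (p 0).1 → wind p z = 0 := by
    intro z hz
    set z0 : ℝ × ℝ := (min ((p 0).1 - 1) (-R - 1), 0) with hz0_def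
    have hz0H : z0.1 < (p 0).1 := by
      have : z0.1 ≤ (p 0).1 - 1 := min_le_left _ _
      linarith
    have hz0R : R ≤ ‖cx z0‖ := by
      have h1 : |(cx z0).re| ≤ ‖cx z0‖ := Complex.abs_re_le_norm _
      have h2 : (cx z0).re = z0.1 := rfl
      have h3 : z0.1 ≤ -R - 1 := min_le_right _ _
      have h4 : |z0.1| ≥ R + 1 := by
        rw [abs_of_nonpos (by linarith)]
        linarith
      rw [h2] at h1
      linarith
    have hz0wind : wind p z0 = 0 := (hfar z0 hz0R).2
    have := wind_const hHconv.isPreconnected hHsub (hz : z ∈ {z : ℝ × ℝ | z.1 < (p 0).1})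
      (hz0H : z0 ∈ {z : ℝ × ℝ | z.1 < (p 0).1})
    rw [this, hz0wind]
  -- part (b)
  have partB : ∀ q : ℝ × ℝ, q.1 < (p 0).1 →
      q ∉ C ∧ ¬ Bornology.IsBounded (connectedComponentIn Cᶜ q) := by
    intro q hq
    have hqC : q ∉ C := (hCiff q).2 (hHavoid q hq)
    refine ⟨hqC, ?_⟩
    intro hbounded
    have hHCc : {z : ℝ × ℝ | z.1 < (p 0).1} ⊆ Cᶜ := by
      intro z hz
      exact (hCiff z).2 (hHavoid z hz)
    have hHcomp : {z : ℝ × ℝ | z.1 < (p 0).1} ⊆ connectedComponentIn Cᶜ q :=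
      hHconv.isPreconnected.subset_connectedComponentIn hq hHCc
    have hHbounded : Bornology.IsBounded {z : ℝ × ℝ | z.1 < (p 0).1} :=
      hbounded.subset hHcomp
    obtain ⟨ρ, hρ⟩ := (Metric.isBounded_iff_subset_closedBall 0).1 hHbounded
    set z1 : ℝ × ℝ := (min ((p 0).1 - 1) (-|ρ| - 1), 0) with hz1_def
    have hz1H : z1.1 < (p 0).1 := by
      have : z1.1 ≤ (p 0).1 - 1 := min_le_left _ _
      linarith
    have hz1ball := hρ hz1H
    have hdist : dist z1 (0 : ℝ × ℝ) ≤ ρ := Metric.mem_closedBall.1 hz1ball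
    have habs : |z1.1| ≥ |ρ| + 1 := by
      have h3 : z1.1 ≤ -|ρ| - 1 := min_le_right _ _
      have h4 : z1.1 ≤ 0 := by
        have := abs_nonneg ρ
        linarith
      rw [abs_of_nonpos h4]
      linarith
    have hd1' : |z1.1| ≤ dist z1 (0 : ℝ × ℝ) := by
      have h1 : dist z1.1 (0 : ℝ) ≤ dist z1 (0 : ℝ × ℝ) := by
        rw [Prod.dist_eq]
        exact le_max_left _ _
      rw [Real.dist_eq, sub_zero] at h1
      exact h1
    have : ρ ≤ |ρ| := le_abs_self ρ
    linarith
  refine ⟨ε, hε, ?_, fun q _ hqx => partB q hqx⟩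
  rintro q hqdist ⟨s, t, hs, ht, hq⟩
  set u : ℝ × ℝ := s • d + t • e with hu_def
  have hqu : q = p 0 + u := by rw [hq, hu_def, add_assoc]
  have hu1 : u.1 = s * d.1 + t * e.1 := rfl
  have hu2 : u.2 = s * d.2 + t * e.2 := rfl
  have hu1pos : 0 < u.1 := by
    rw [hu1]
    exact add_pos (mul_pos hs hd1) (mul_pos ht he1)
  have hunorm : ‖u‖ < ε := by
    have hd : dist q (p 0) = ‖u‖ := by
      rw [hqu, dist_eq_norm]
      simp
    linarith [hd ▸ hqdist]
  -- the open cone near p 0 avoids C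
  have hcone : ∀ s' t' : ℝ, 0 < s' → 0 < t' → ‖s' • d + t' • e‖ < ε →
      ∀ k : Fin n, (p 0 + (s' • d + t' • e)) ∉ segment ℝ (p k) (p (k + 1)) := by
    intro s' t' hs' ht' hnorm k hmem
    by_cases hk0 : k = 0
    · subst hk0
      have h01 : (0 : Fin n) + 1 = 1 := zero_add 1
      rw [h01, hp1] at hmem
      obtain ⟨a, b, ha, hb, hab, hsum⟩ := hmem
      have hf := congrArg Prod.fst hsum
      have hsn := congrArg Prod.snd hsum
      simp only [Prod.fst_add, Prod.snd_add, Prod.smul_fst, Prod.smul_snd,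
        smul_eq_mul] at hf hsn
      have h1' : b * d.1 = s' * d.1 + t' * e.1 := by linear_combination hf - (p 0).1 * hab
      have h2' : b * d.2 = s' * d.2 + t' * e.2 := by linear_combination hsn - (p 0).2 * hab
      have hzero : t' * Δ = 0 := by
        rw [hΔ_def]
        linear_combination d.2 * h1' - d.1 * h2'
      exact hΔ ((mul_eq_zero.1 hzero).resolve_left (ne_of_gt ht'))
    by_cases hk1 : k = 0 - 1
    · subst hk1
      rw [hidx1, hpe] at hmem
      obtain ⟨a, b, ha, hb, hab, hsum⟩ := hmem
      have hf := congrArg Prod.fst hsum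
      have hsn := congrArg Prod.snd hsum
      simp only [Prod.fst_add, Prod.snd_add, Prod.smul_fst, Prod.smul_snd,
        smul_eq_mul] at hf hsn
      have h1' : a * e.1 = s' * d.1 + t' * e.1 := by linear_combination hf - (p 0).1 * hab
      have h2' : a * e.2 = s' * d.2 + t' * e.2 := by linear_combination hsn - (p 0).2 * hab
      have hzero : s' * Δ = 0 := by
        rw [hΔ_def]
        linear_combination e.1 * h2' - e.2 * h1'
      exact hΔ ((mul_eq_zero.1 hzero).resolve_left (ne_of_gt hs'))
    · have hge' := hfar_seg k hk0 hk1 _ hmem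
      have hw1 : (s' • d + t' • e).1 ≤ ‖s' • d + t' • e‖ := by
        refine le_trans (le_abs_self _) ?_
        rw [← Real.norm_eq_abs]
        exact norm_fst_le _
      have hpt : (p 0 + (s' • d + t' • e)).1 = (p 0).1 + (s' • d + t' • e).1 := rfl
      rw [hpt] at hge'
      rw [hε_def] at hnorm
      linarith
  -- points on the ray towards q avoid C
  have hray : ∀ r : ℝ, 0 < r → r ≤ 1 → ∀ k : Fin n,
      p 0 + r • u ∉ segment ℝ (p k) (p (k + 1)) := by
    intro r hr hr1 k
    have hru : r • u = (r * s) • d + (r * t) • e := by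
      rw [hu_def, smul_add, smul_smul, smul_smul]
    rw [hru]
    apply hcone _ _ (mul_pos hr hs) (mul_pos hr ht)
    rw [← hru]
    calc ‖r • u‖ = |r| * ‖u‖ := by rw [norm_smul, Real.norm_eq_abs]
      _ ≤ 1 * ‖u‖ := by
          apply mul_le_mul_of_nonneg_right _ (norm_nonneg u)
          rw [abs_of_pos hr]
          exact hr1
      _ = ‖u‖ := one_mul _
      _ < ε := hunorm
  have hq_avoid : ∀ k : Fin n, q ∉ segment ℝ (p k) (p (k + 1)) := by
    intro k
    have := hray 1 one_pos (le_refl 1) k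
    rw [one_smul, ← hqu] at this
    exact this
  have hqC : q ∉ C := (hCiff q).2 hq_avoid
  -- complex quantities
  set U : ℂ := cx u with hU_def
  set D : ℂ := cx d with hDc_def
  set E : ℂ := cx e with hEc_def
  have hUre : 0 < U.re := hu1pos
  have hDre : 0 < D.re := hd1
  have hEre : 0 < E.re := he1
  have hUne : U ≠ 0 := ne_zero_of_re_pos' hUre
  have hDne : D ≠ 0 := ne_zero_of_re_pos' hDre
  have hEne : E ≠ 0 := ne_zero_of_re_pos' hEre
  have hveq1 : cx (p 1) - cx (p 0) = D := by
    rw [hDc_def, hd_def]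
    exact (cx_sub _ _).symm
  have hveq2 : cx (p (0 - 1)) - cx (p 0) = E := by
    rw [hEc_def, he_def]
    exact (cx_sub _ _).symm
  have hvne : ∀ k : Fin n, k ≠ 0 → cx (p k) - cx (p 0) ≠ 0 := by
    intro k hk
    apply sub_cx_ne
    intro h
    have := hleft k hk
    rw [h] at this
    exact lt_irrefl _ this
  have hrest : ∀ k : Fin n, k ≠ 0 → k ≠ 0 - 1 →
      (cx (p (k + 1)) - cx (p 0)) / (cx (p k) - cx (p 0)) ∈ Complex.slitPlane :=
    fun k hk0 hk1 => ratio_slit (hp0far k hk0 hk1)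
  -- determinant identities
  have hdetDU : D.im * U.re - D.re * U.im = -(t * Δ) := by
    show d.2 * u.1 - d.1 * u.2 = -(t * Δ)
    rw [hu1, hu2, hΔ_def]
    ring
  have hdetUE : U.im * E.re - U.re * E.im = -(s * Δ) := by
    show u.2 * e.1 - u.1 * e.2 = -(s * Δ)
    rw [hu1, hu2, hΔ_def]
    ring
  have hDslit : D / (-U) ∈ Complex.slitPlane := by
    apply div_slit_of_det (neg_ne_zero.2 hUne)
    have h1 : D.im * (-U).re - D.re * (-U).im = t * Δ := by
      rw [Complex.neg_re, Complex.neg_im]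
      linarith [hdetDU]
    rw [h1]
    exact mul_ne_zero (ne_of_gt ht) hΔ
  have hEslit : (-U) / E ∈ Complex.slitPlane := by
    apply div_slit_of_det hEne
    have h1 : (-U).im * E.re - (-U).re * E.im = s * Δ := by
      rw [Complex.neg_re, Complex.neg_im]
      linarith [hdetUE]
    rw [h1]
    exact mul_ne_zero (ne_of_gt hs) hΔ
  have hDslit' : (cx (p 1) - cx (p 0)) / (-(cx u)) ∈ Complex.slitPlane := by
    rw [hveq1, ← hU_def]
    exact hDslit
  have hEslit' : (-(cx u)) / (cx (p (0 - 1)) - cx (p 0)) ∈ Complex.slitPlane := by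
    rw [hveq2, ← hU_def]
    exact hEslit
  have hUne' : cx u ≠ 0 := by rw [← hU_def]; exact hUne
  have hwq := wind_ray hn one_pos hvne hrest hDslit' hEslit' hUne' hray
  rw [one_smul, ← hqu] at hwq
  rw [hveq1, hveq2, ← hU_def] at hwq
  -- the leftward ray
  set uL : ℝ × ℝ := (-1, 0) with huL_def
  have hcxuL : cx uL = -1 := by
    apply Complex.ext <;> simp [cx, huL_def]
  have hUneL : cx uL ≠ 0 := by rw [hcxuL]; norm_num
  have hrayL : ∀ r : ℝ, 0 < r → r ≤ 1 → ∀ k : Fin n,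
      p 0 + r • uL ∉ segment ℝ (p k) (p (k + 1)) := by
    intro r hr _ k
    apply hHavoid
    show (p 0).1 + r * (-1) < (p 0).1
    linarith
  have hDslitL : (cx (p 1) - cx (p 0)) / (-(cx uL)) ∈ Complex.slitPlane := by
    rw [hcxuL, hveq1]
    simp only [neg_neg, div_one]
    exact Complex.mem_slitPlane_iff.2 (Or.inl hDre)
  have hEslitL : (-(cx uL)) / (cx (p (0 - 1)) - cx (p 0)) ∈ Complex.slitPlane := by
    rw [hcxuL, hveq2]
    simp only [neg_neg]
    rw [one_div]
    apply Complex.mem_slitPlane_iff.2 (Or.inl _)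
    rw [Complex.inv_re]
    exact div_pos hEre (Complex.normSq_pos.2 hEne)
  have hwqL := wind_ray hn one_pos hvne hrest hDslitL hEslitL hUneL hrayL
  have hqL0 : wind p (p 0 + (1 : ℝ) • uL) = 0 := by
    apply hwindH
    show (p 0).1 + 1 * (-1) < (p 0).1
    linarith
  rw [hqL0, hcxuL, hveq1, hveq2] at hwqL
  simp only [neg_neg, div_one, one_div] at hwqL
  have harginv : Complex.arg E⁻¹ = -Complex.arg E := by
    rw [Complex.arg_inv, if_neg]
    intro h
    have := (Complex.arg_eq_pi_iff.1 h).1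
    linarith
  rw [harginv] at hwqL
  -- arg computations
  have hargDU : Complex.arg (D / U) = Complex.arg D - Complex.arg U := arg_div_eq hDre hUre
  have hargUE : Complex.arg (U / E) = Complex.arg U - Complex.arg E := arg_div_eq hUre hEre
  have him1 : (D / U).im = -(t * Δ) / Complex.normSq U := by
    rw [Complex.div_im,
      show D.im * U.re / Complex.normSq U - D.re * U.im / Complex.normSq U
        = (D.im * U.re - D.re * U.im) / Complex.normSq U from by ring, hdetDU]
  have him2 : (U / E).im = -(s * Δ) / Complex.normSq E := by
    rw [Complex.div_im,
      show U.im * E.re / Complex.normSq E - U.re * E.im / Complex.normSq E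
        = (U.im * E.re - U.re * E.im) / Complex.normSq E from by ring, hdetUE]
  have hnsU : 0 < Complex.normSq U := Complex.normSq_pos.2 hUne
  have hnsE : 0 < Complex.normSq E := Complex.normSq_pos.2 hEne
  have hwind_val : wind p q = 2 * Real.pi ∨ wind p q = -(2 * Real.pi) := by
    rcases hΔ.lt_or_gt with hΔneg | hΔpos
    · right
      have h1 : 0 < (D / U).im := by
        rw [him1]
        apply div_pos _ hnsU
        exact neg_pos.2 (mul_neg_of_pos_of_neg ht hΔneg)
      have h2 : 0 < (U / E).im := by
        rw [him2]
        apply div_pos _ hnsE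
        exact neg_pos.2 (mul_neg_of_pos_of_neg hs hΔneg)
      have e1 : Complex.arg (D / -U) = Complex.arg (D / U) - Real.pi := by
        rw [div_neg]
        exact Complex.arg_neg_eq_arg_sub_pi_of_im_pos h1
      have e2 : Complex.arg (-U / E) = Complex.arg (U / E) - Real.pi := by
        rw [neg_div]
        exact Complex.arg_neg_eq_arg_sub_pi_of_im_pos h2
      rw [hwq, e1, e2, hargDU, hargUE]
      linarith [hwqL]
    · left
      have h1 : (D / U).im < 0 := by
        rw [him1]
        apply div_neg_of_neg_of_pos _ hnsU
        exact neg_lt_zero.2 (mul_pos ht hΔpos)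
      have h2 : (U / E).im < 0 := by
        rw [him2]
        apply div_neg_of_neg_of_pos _ hnsE
        exact neg_lt_zero.2 (mul_pos hs hΔpos)
      have e1 : Complex.arg (D / -U) = Complex.arg (D / U) + Real.pi := by
        rw [div_neg]
        exact Complex.arg_neg_eq_arg_add_pi_of_im_neg h1
      have e2 : Complex.arg (-U / E) = Complex.arg (U / E) + Real.pi := by
        rw [neg_div]
        exact Complex.arg_neg_eq_arg_add_pi_of_im_neg h2
      rw [hwq, e1, e2, hargDU, hargUE]
      linarith [hwqL]
  have hne0 : wind p q ≠ 0 := by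
    rcases hwind_val with h | h <;> rw [h] <;> intro hcon <;> linarith
  -- boundedness of the connected component
  refine ⟨hqC, ?_⟩
  by_contra hnb
  have hqCc : q ∈ Cᶜ := hqC
  have hcompsub : connectedComponentIn Cᶜ q ⊆ Cᶜ := connectedComponentIn_subset _ _
  have hqcomp : q ∈ connectedComponentIn Cᶜ q := mem_connectedComponentIn hqCc
  have hnsub : ¬ connectedComponentIn Cᶜ q ⊆ Metric.closedBall (0 : ℝ × ℝ) R := by
    intro hsub
    exact hnb ((Metric.isBounded_iff_subset_closedBall 0).2 ⟨R, hsub⟩)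
  obtain ⟨z, hzcomp, hzball⟩ := not_subset.1 hnsub
  have hzR : R ≤ ‖cx z‖ := by
    have h1 : R < dist z (0 : ℝ × ℝ) := by
      by_contra hcon
      exact hzball (Metric.mem_closedBall.2 (not_lt.1 hcon))
    have h2 : dist z (0 : ℝ × ℝ) = ‖z‖ := dist_zero_right z
    have h3 : ‖z‖ ≤ ‖cx z‖ := by
      rw [Prod.norm_def]
      apply max_le
      · rw [Real.norm_eq_abs]
        exact Complex.abs_re_le_norm (cx z)
      · rw [Real.norm_eq_abs]
        exact Complex.abs_im_le_norm (cx z)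
    linarith
  have hz0 : wind p z = 0 := (hfar z hzR).2
  have hconst := wind_const (isPreconnected_connectedComponentIn (F := Cᶜ) (x := q))
    (fun w hw k => (hCiff w).1 (hcompsub hw) k) hqcomp hzcomp
  rw [hconst, hz0] at hne0
  exact hne0 rfl
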